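/- For all integers n ≥ 1 and all real numbers x, Σ_{i=0}^{n} (-1)^i · C(n,i) · (x - i)^n = n! (Ruiz's identity). -/

import Mathlib

open Finset Nat Function
open scoped fwdDiff

private lemma fwdDiff_pow (h : ℝ) (m : ℕ) :
    Δ_[h] (fun y : ℝ ↦ y ^ m) =
      ∑ j ∈ Finset.range m, ((m.choose j : ℝ) * h ^ (m - j)) • (fun y : ℝ ↦ y ^ j) := by
  ext y
  simp only [fwdDiff, Finset.sum_apply, Pi.smul_apply, smul_eq_mul]
  rw [add_pow]
  rw [Finset.sum_range_succ]
  simp [Nat.choose_self]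
  exact Finset.sum_congr rfl fun j _ ↦ by ring

private lemma key (h : ℝ) (n : ℕ) :
    (∀ m, m < n → (Δ_[h])^[n] (fun y : ℝ ↦ y ^ m) = 0) ∧
      (Δ_[h])^[n] (fun y : ℝ ↦ y ^ n) = fun _ ↦ h ^ n * n.factorial := by
  induction n with
  | zero => exact ⟨fun m hm ↦ absurd hm (Nat.not_lt_zero m), by ext y; simp⟩
  | succ n ih =>
    have hz : ∀ m, m < n + 1 → (Δ_[h])^[n+1] (fun y : ℝ ↦ y ^ m) = 0 := by
      intro m hm
      rw [Function.iterate_succ_apply, fwdDiff_pow, fwdDiff_iter_finset_sum]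
      refine Finset.sum_eq_zero fun j hj ↦ ?_
      rw [fwdDiff_iter_const_smul, ih.1 j (lt_of_lt_of_le (Finset.mem_range.mp hj) (by omega)),
        smul_zero]
    refine ⟨hz, ?_⟩
    rw [Function.iterate_succ_apply, fwdDiff_pow, fwdDiff_iter_finset_sum,
      Finset.sum_range_succ]
    rw [Finset.sum_eq_zero (fun j hj ↦ by
      rw [fwdDiff_iter_const_smul, ih.1 j (Finset.mem_range.mp hj), smul_zero])]
    rw [zero_add, fwdDiff_iter_const_smul, ih.2]
    ext y
    simp [Nat.factorial_succ, Nat.choose_succ_self_right]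
    ring

/-- Ruiz's identity: for all integers `n ≥ 1` and all real `x`,
`∑_{i=0}^{n} (-1)^i C(n,i) (x-i)^n = n!`. -/
theorem stmt1 (n : ℕ) (hn : 1 ≤ n) (x : ℝ) :
    ∑ i ∈ Finset.range (n + 1), (-1 : ℝ) ^ i * (n.choose i : ℝ) * (x - i) ^ n =
      (n.factorial : ℝ) := by
  have h1 := fwdDiff_iter_eq_sum_shift (-1 : ℝ) (fun y : ℝ ↦ y ^ n) n x
  rw [(key (-1 : ℝ) n).2] at h1
  have h2 : ∀ k ∈ Finset.range (n + 1),
      (((-1 : ℤ) ^ (n - k) * n.choose k) • (x + k • (-1 : ℝ)) ^ n : ℝ)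
        = (-1 : ℝ) ^ (n - k) * (n.choose k : ℝ) * (x - k) ^ n := by
    intro k hk
    rw [zsmul_eq_mul, nsmul_eq_mul]
    push_cast
    ring
  rw [Finset.sum_congr rfl h2] at h1
  have h3 : ∀ k ∈ Finset.range (n + 1),
      (-1 : ℝ) ^ k * (n.choose k : ℝ) * (x - k) ^ n
        = (-1 : ℝ) ^ n * ((-1 : ℝ) ^ (n - k) * (n.choose k : ℝ) * (x - k) ^ n) := by
    intro k hk
    have hk' : k ≤ n := Nat.lt_succ_iff.mp (Finset.mem_range.mp hk)
    have : (-1 : ℝ) ^ n = (-1 : ℝ) ^ k * (-1 : ℝ) ^ (n - k) := by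
      rw [← pow_add, Nat.add_sub_cancel' hk']
    have h4 : ((-1 : ℝ)) ^ (n - k) * (-1) ^ (n - k) = 1 := by
      rw [← pow_add, ← two_mul, pow_mul]; norm_num
    rw [this]
    linear_combination (-((n.choose k : ℝ) * (x - k) ^ n * (-1 : ℝ) ^ k)) * h4
  simp only [] at h1
  rw [Finset.sum_congr rfl h3, ← Finset.mul_sum, ← h1]
  rw [← mul_assoc, ← mul_pow]
  norm_num
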